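/- Let A, Ã ∈ ℂ^{m×p} (m ≥ p) be full-rank matrices with polar decompositions A = UH and Ã = ŨH̃, where U, Ũ have orthonormal columns and H, H̃ are Hermitian positive-definite. Then ‖U − Ũ‖_F ≤ 2/(σ_p(A) + σ_p(Ã)) · ‖A − Ã‖_F, where σ_p denotes the smallest singular value and ‖·‖_F the Frobenius norm. -/

import Mathlib

open Matrix
open scoped ComplexOrder

/-- Frobenius norm of a complex matrix. -/
noncomputable def frob {m p : ℕ} (A : Matrix (Fin m) (Fin p) ℂ) : ℝ :=
  Real.sqrt (∑ i, ∑ j, ‖A i j‖ ^ 2)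

/-- Euclidean norm of a complex vector. -/
noncomputable def vnorm {p : ℕ} (x : Fin p → ℂ) : ℝ :=
  Real.sqrt (∑ i, ‖x i‖ ^ 2)

/-- The smallest singular value of an `m × p` matrix (`m ≥ p`), characterized as the
infimum of `‖A x‖` over unit vectors `x`. -/
noncomputable def sigmaMin {m p : ℕ} (A : Matrix (Fin m) (Fin p) ℂ) : ℝ :=
  sInf {r : ℝ | ∃ x : Fin p → ℂ, vnorm x = 1 ∧ r = vnorm (A.mulVec x)}

namespace PolarAux

lemma re_le_norm' (z : ℂ) : z.re ≤ ‖z‖ := by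
  simpa using RCLike.re_le_norm (K := ℂ) z

lemma star_mul_self_eq (z : ℂ) : star z * z = ((‖z‖ ^ 2 : ℝ) : ℂ) := by
  rw [Complex.star_def, mul_comm, Complex.mul_conj']
  norm_cast

lemma dot_star_self {n : ℕ} (x : Fin n → ℂ) :
    dotProduct (star x) x = ((∑ i, ‖x i‖ ^ 2 : ℝ) : ℂ) := by
  push_cast
  unfold dotProduct
  refine Finset.sum_congr rfl fun i _ => ?_
  simpa using star_mul_self_eq (x i)

lemma vnorm_sq {n : ℕ} (x : Fin n → ℂ) : vnorm x ^ 2 = ∑ i, ‖x i‖ ^ 2 :=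
  Real.sq_sqrt (Finset.sum_nonneg fun _ _ => sq_nonneg _)

lemma sum_sq_mulVec_isometry {m p : ℕ} {U : Matrix (Fin m) (Fin p) ℂ}
    (hU : Uᴴ * U = 1) (y : Fin p → ℂ) :
    ∑ i, ‖(U *ᵥ y) i‖ ^ 2 = ∑ i, ‖y i‖ ^ 2 := by
  have h : dotProduct (star (U *ᵥ y)) (U *ᵥ y) = dotProduct (star y) y := by
    rw [star_mulVec, dotProduct_mulVec, vecMul_vecMul, hU, vecMul_one]
  rw [dot_star_self, dot_star_self] at h
  exact_mod_cast h

lemma vnorm_mulVec_eq {m p : ℕ} {U : Matrix (Fin m) (Fin p) ℂ}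
    (hU : Uᴴ * U = 1) (B : Matrix (Fin p) (Fin p) ℂ) (x : Fin p → ℂ) :
    vnorm ((U * B) *ᵥ x) = vnorm (B *ᵥ x) := by
  unfold vnorm
  rw [← mulVec_mulVec, sum_sq_mulVec_isometry hU]

lemma vnorm_smul_real {n : ℕ} (r : ℝ) (x : Fin n → ℂ) :
    vnorm (r • x) = |r| * vnorm x := by
  unfold vnorm
  have h : ∀ i, ‖(r • x) i‖ ^ 2 = r ^ 2 * ‖x i‖ ^ 2 := by
    intro i
    simp [norm_smul, mul_pow]
  simp_rw [h, ← Finset.mul_sum]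
  rw [Real.sqrt_mul (sq_nonneg r), Real.sqrt_sq_eq_abs]

/-- trace of a product of two PSD matrices has nonnegative real part -/
lemma trace_mul_re_nonneg {n : ℕ} {P N : Matrix (Fin n) (Fin n) ℂ}
    (hP : P.PosSemidef) (hN : N.PosSemidef) : 0 ≤ (trace (P * N)).re := by
  obtain ⟨B, rfl⟩ : ∃ B : Matrix (Fin n) (Fin n) ℂ, P = Bᴴ * B := by
    open scoped MatrixOrder Matrix.Norms.L2Operator in
    exact CStarAlgebra.nonneg_iff_eq_star_mul_self.mp hP.nonneg
  rw [Matrix.mul_assoc, trace_mul_comm]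
  have hBNB := hN.mul_mul_conjTranspose_same B
  have hdiag : ∀ i, (0:ℂ) ≤ (B * N * Bᴴ) i i := fun i => by
    have h := hBNB.dotProduct_mulVec_nonneg (Pi.single i 1)
    simpa [dotProduct, Pi.single_apply, apply_ite, ite_mul, mul_ite] using h
  have h : (0:ℂ) ≤ trace (B * N * Bᴴ) := Finset.sum_nonneg fun i _ => hdiag i
  exact (Complex.le_def.mp h).1

lemma posSemidef_sub_smul {n : ℕ} {H : Matrix (Fin n) (Fin n) ℂ} (hH : H.PosDef)
    {c : ℝ} (hc : ∀ i, c ≤ hH.1.eigenvalues i) :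
    (H - (c : ℂ) • 1).PosSemidef := by
  have hsp := hH.1.spectral_theorem
  rw [Unitary.conjStarAlgAut_apply, Matrix.star_eq_conjTranspose] at hsp
  set V : Matrix (Fin n) (Fin n) ℂ := (hH.1.eigenvectorUnitary : Matrix (Fin n) (Fin n) ℂ)
    with hVdef
  have hVV : V * Vᴴ = 1 := by
    have := Matrix.mem_unitaryGroup_iff.mp hH.1.eigenvectorUnitary.2
    simpa [Matrix.star_eq_conjTranspose] using this
  have key : H - (c : ℂ) • 1 =
      V * (diagonal fun i => ((hH.1.eigenvalues i - c : ℝ) : ℂ)) * Vᴴ := by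
    have hd : (diagonal fun i => ((hH.1.eigenvalues i - c : ℝ) : ℂ))
        = diagonal (RCLike.ofReal ∘ hH.1.eigenvalues) - (c : ℂ) • 1 := by
      ext i j
      rcases eq_or_ne i j with rfl | hij
      · simp only [Matrix.diagonal_apply_eq, Matrix.sub_apply, Matrix.smul_apply,
          Matrix.one_apply_eq, smul_eq_mul, mul_one, Function.comp_apply]
        rw [Complex.ofReal_sub]
        rfl
      · simp [Matrix.diagonal_apply_ne _ hij, Matrix.one_apply_ne hij]
    have h2 : V * ((c : ℂ) • 1) * Vᴴ = (c : ℂ) • 1 := by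
      rw [Matrix.mul_smul, Matrix.mul_one, Matrix.smul_mul, hVV]
    rw [hd, Matrix.mul_sub, Matrix.sub_mul, h2, ← hsp]
  rw [key]
  refine Matrix.PosSemidef.mul_mul_conjTranspose_same ?_ V
  refine Matrix.PosSemidef.diagonal fun i => ?_
  have h0 : (0:ℝ) ≤ hH.1.eigenvalues i - c := by linarith [hc i]
  exact Complex.zero_le_real.mpr h0

lemma trace_conjTranspose_mul_self_eq {m p : ℕ} (D : Matrix (Fin m) (Fin p) ℂ) :
    trace (Dᴴ * D) = ((∑ i, ∑ j, ‖D i j‖ ^ 2 : ℝ) : ℂ) := by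
  have h : trace (Dᴴ * D) = ∑ j, ∑ i, star (D i j) * D i j := by
    simp [Matrix.trace, Matrix.mul_apply, Matrix.conjTranspose_apply, Matrix.diag]
  rw [h, Finset.sum_comm]
  push_cast
  refine Finset.sum_congr rfl fun i _ => Finset.sum_congr rfl fun j _ => ?_
  simpa using star_mul_self_eq (D i j)

lemma re_trace_le_frob {m p : ℕ} (D E : Matrix (Fin m) (Fin p) ℂ) :
    (trace (Dᴴ * E)).re ≤ frob D * frob E := by
  have h : trace (Dᴴ * E) = ∑ j, ∑ i, star (D i j) * E i j := by
    simp [Matrix.trace, Matrix.mul_apply, Matrix.conjTranspose_apply, Matrix.diag]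
  rw [h]
  have hre : (∑ j, ∑ i, star (D i j) * E i j).re
      = ∑ j, ∑ i, (star (D i j) * E i j).re := by
    rw [Complex.re_sum]
    exact Finset.sum_congr rfl fun j _ => Complex.re_sum _ _
  rw [hre]
  calc ∑ j, ∑ i, (star (D i j) * E i j).re
      ≤ ∑ j, ∑ i, ‖D i j‖ * ‖E i j‖ := by
        refine Finset.sum_le_sum fun j _ => Finset.sum_le_sum fun i _ => ?_
        calc (star (D i j) * E i j).re ≤ ‖star (D i j) * E i j‖ := re_le_norm' _
          _ = ‖D i j‖ * ‖E i j‖ := by rw [norm_mul, norm_star]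
    _ ≤ frob D * frob E := by
        unfold frob
        rw [Finset.sum_comm]
        have h2 := Real.sum_mul_le_sqrt_mul_sqrt (Finset.univ : Finset (Fin m × Fin p))
          (fun x => ‖D x.1 x.2‖) (fun x => ‖E x.1 x.2‖)
        simpa [Fintype.sum_prod_type] using h2

lemma vnorm_eigenbasis {p : ℕ} {H : Matrix (Fin p) (Fin p) ℂ} (hH : H.IsHermitian)
    (i : Fin p) : vnorm (⇑(hH.eigenvectorBasis i)) = 1 := by
  have h := hH.eigenvectorBasis.orthonormal.1 i
  rw [EuclideanSpace.norm_eq] at h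
  unfold vnorm
  exact h

lemma sigmaMin_bddBelow {m p : ℕ} (A : Matrix (Fin m) (Fin p) ℂ) :
    BddBelow {r : ℝ | ∃ x : Fin p → ℂ, vnorm x = 1 ∧ r = vnorm (A.mulVec x)} := by
  refine ⟨0, ?_⟩
  rintro r ⟨x, hx, rfl⟩
  exact Real.sqrt_nonneg _

lemma vnorm_mulVec_eigenbasis {m p : ℕ}
    {U : Matrix (Fin m) (Fin p) ℂ} {H : Matrix (Fin p) (Fin p) ℂ}
    (hU : Uᴴ * U = 1) (hH : H.PosDef) (i : Fin p) :
    vnorm ((U * H).mulVec ⇑(hH.1.eigenvectorBasis i)) = hH.1.eigenvalues i := by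
  rw [vnorm_mulVec_eq hU H _, hH.1.mulVec_eigenvectorBasis, vnorm_smul_real,
    vnorm_eigenbasis hH.1 i, abs_of_pos (hH.eigenvalues_pos i), mul_one]

lemma sigmaMin_le_eigenvalues {m p : ℕ} (hp : 0 < p)
    {U : Matrix (Fin m) (Fin p) ℂ} {H : Matrix (Fin p) (Fin p) ℂ}
    (hU : Uᴴ * U = 1) (hH : H.PosDef) (i : Fin p) :
    sigmaMin (U * H) ≤ hH.1.eigenvalues i := by
  haveI : Nonempty (Fin p) := ⟨⟨0, hp⟩⟩
  refine csInf_le (sigmaMin_bddBelow _) ?_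
  exact ⟨⇑(hH.1.eigenvectorBasis i), vnorm_eigenbasis hH.1 i,
    (vnorm_mulVec_eigenbasis hU hH i).symm⟩

lemma re_dot_le_vnorm {p : ℕ} (x y : Fin p → ℂ) :
    (dotProduct (star x) y).re ≤ vnorm x * vnorm y := by
  have h : dotProduct (star x) y = ∑ i, star (x i) * y i := rfl
  rw [h, Complex.re_sum]
  calc ∑ i, (star (x i) * y i).re
      ≤ ∑ i, ‖x i‖ * ‖y i‖ := by
        refine Finset.sum_le_sum fun i _ => ?_
        calc (star (x i) * y i).re ≤ ‖star (x i) * y i‖ := re_le_norm' _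
          _ = ‖x i‖ * ‖y i‖ := by rw [norm_mul, norm_star]
    _ ≤ vnorm x * vnorm y :=
        Real.sum_mul_le_sqrt_mul_sqrt Finset.univ (fun i => ‖x i‖) (fun i => ‖y i‖)

lemma sigmaMin_pos {m p : ℕ} (hp : 0 < p)
    {U : Matrix (Fin m) (Fin p) ℂ} {H : Matrix (Fin p) (Fin p) ℂ}
    (hU : Uᴴ * U = 1) (hH : H.PosDef) :
    0 < sigmaMin (U * H) := by
  haveI : Nonempty (Fin p) := ⟨⟨0, hp⟩⟩
  set c : ℝ := Finset.univ.inf' Finset.univ_nonempty hH.1.eigenvalues with hc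
  have hcpos : 0 < c := by
    rw [hc, Finset.lt_inf'_iff]
    exact fun i _ => hH.eigenvalues_pos i
  have hcle : ∀ i, c ≤ hH.1.eigenvalues i := fun i =>
    Finset.inf'_le _ (Finset.mem_univ i)
  have hPSD := posSemidef_sub_smul hH hcle
  have hlb : ∀ r ∈ {r : ℝ | ∃ x : Fin p → ℂ, vnorm x = 1 ∧ r = vnorm ((U * H).mulVec x)},
      c ≤ r := by
    rintro r ⟨x, hx, rfl⟩
    have hx2 : ∑ i, ‖x i‖ ^ 2 = 1 := by
      have h := vnorm_sq x
      rw [hx] at h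
      linarith [h]
    have h0 := hPSD.dotProduct_mulVec_nonneg x
    have hexp : (H - (c:ℂ) • 1) *ᵥ x = H *ᵥ x - (c:ℂ) • x := by
      rw [Matrix.sub_mulVec, Matrix.smul_mulVec, Matrix.one_mulVec]
    rw [hexp, dotProduct_sub, dotProduct_smul, dot_star_self, hx2] at h0
    have h1 : c ≤ (dotProduct (star x) (H *ᵥ x)).re := by
      have h' := (Complex.le_def.mp h0).1
      simp only [Complex.zero_re, Complex.sub_re, smul_eq_mul, Complex.ofReal_one, mul_one,
        Complex.ofReal_re] at h'
      linarith
    have h2 : (dotProduct (star x) (H *ᵥ x)).re ≤ vnorm x * vnorm (H *ᵥ x) :=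
      re_dot_le_vnorm x (H *ᵥ x)
    have h3 : vnorm ((U * H).mulVec x) = vnorm (H *ᵥ x) := vnorm_mulVec_eq hU H x
    rw [h3]
    rw [hx, one_mul] at h2
    linarith
  have hle : c ≤ sigmaMin (U * H) := by
    refine le_csInf ?_ hlb
    exact ⟨hH.1.eigenvalues ⟨0, hp⟩, ⇑(hH.1.eigenvectorBasis ⟨0, hp⟩),
      vnorm_eigenbasis hH.1 _, (vnorm_mulVec_eigenbasis hU hH _).symm⟩
  linarith

end PolarAux

open PolarAux

theorem polar_factor_perturbation {m p : ℕ} (hmp : p ≤ m)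
    (A A' U U' : Matrix (Fin m) (Fin p) ℂ) (H H' : Matrix (Fin p) (Fin p) ℂ)
    (hA : A.rank = p) (hA' : A'.rank = p)
    (hAUH : A = U * H) (hU : Uᴴ * U = 1) (hH : H.PosDef)
    (hA'UH : A' = U' * H') (hU' : U'ᴴ * U' = 1) (hH' : H'.PosDef) :
    frob (U - U') ≤ 2 / (sigmaMin A + sigmaMin A') * frob (A - A') := by
  subst hAUH hA'UH
  rcases Nat.eq_zero_or_pos p with hp | hp
  · subst hp
    simp [frob]
  set D : Matrix (Fin m) (Fin p) ℂ := U - U' with hD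
  set E : Matrix (Fin m) (Fin p) ℂ := U * H - U' * H' with hE
  set σ : ℝ := sigmaMin (U * H) with hσ
  set σ' : ℝ := sigmaMin (U' * H') with hσ'
  have hσpos : 0 < σ := sigmaMin_pos hp hU hH
  have hσ'pos : 0 < σ' := sigmaMin_pos hp hU' hH'
  have hσle : ∀ i, σ ≤ hH.1.eigenvalues i := sigmaMin_le_eigenvalues hp hU hH
  have hσ'le : ∀ i, σ' ≤ hH'.1.eigenvalues i := sigmaMin_le_eigenvalues hp hU' hH'
  set t : ℝ := ∑ i, ∑ j, ‖D i j‖ ^ 2 with ht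
  have htnn : 0 ≤ t := Finset.sum_nonneg fun _ _ => Finset.sum_nonneg fun _ _ => sq_nonneg _
  have hfd : frob D ^ 2 = t := by
    rw [frob, Real.sq_sqrt htnn]
  have htrN : trace (Dᴴ * D) = ((t : ℝ) : ℂ) := trace_conjTranspose_mul_self_eq D
  have hNpsd : (Dᴴ * D).PosSemidef := Matrix.posSemidef_conjTranspose_mul_self D
  have hHN : σ * t ≤ (trace (H * (Dᴴ * D))).re := by
    have hsplit : H * (Dᴴ * D) = (H - (σ:ℂ) • 1) * (Dᴴ * D) + (σ:ℂ) • (Dᴴ * D) := by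
      rw [Matrix.sub_mul, Matrix.smul_mul, Matrix.one_mul]
      abel
    rw [hsplit, trace_add, trace_smul, Complex.add_re]
    have h1 := trace_mul_re_nonneg (posSemidef_sub_smul hH hσle) hNpsd
    have h2 : ((σ:ℂ) • trace (Dᴴ * D)).re = σ * t := by
      rw [htrN, smul_eq_mul, ← Complex.ofReal_mul, Complex.ofReal_re]
    rw [h2]
    linarith
  have hNH' : σ' * t ≤ (trace ((Dᴴ * D) * H')).re := by
    rw [trace_mul_comm]
    have hsplit : H' * (Dᴴ * D) = (H' - (σ':ℂ) • 1) * (Dᴴ * D) + (σ':ℂ) • (Dᴴ * D) := by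
      rw [Matrix.sub_mul, Matrix.smul_mul, Matrix.one_mul]
      abel
    rw [hsplit, trace_add, trace_smul, Complex.add_re]
    have h1 := trace_mul_re_nonneg (posSemidef_sub_smul hH' hσ'le) hNpsd
    have h2 : ((σ':ℂ) • trace (Dᴴ * D)).re = σ' * t := by
      rw [htrN, smul_eq_mul, ← Complex.ofReal_mul, Complex.ofReal_re]
    rw [h2]
    linarith
  -- trace identity
  have h1 : Dᴴ * E = H + H' - (Uᴴ * U') * H' - (U'ᴴ * U) * H := by
    rw [hD, hE]
    simp only [Matrix.conjTranspose_sub, Matrix.sub_mul, Matrix.mul_sub,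
      ← Matrix.mul_assoc, hU, hU', Matrix.one_mul]
    abel
  have h2 : Eᴴ * D = H + H' - H * (Uᴴ * U') - H' * (U'ᴴ * U) := by
    rw [hD, hE]
    simp only [Matrix.conjTranspose_sub, Matrix.conjTranspose_mul, Matrix.sub_mul,
      Matrix.mul_sub, Matrix.mul_assoc, hU, hU', Matrix.mul_one, hH.1.eq, hH'.1.eq]
    abel
  have h3 : Dᴴ * D = 1 + 1 - Uᴴ * U' - U'ᴴ * U := by
    rw [hD]
    simp only [Matrix.conjTranspose_sub, Matrix.sub_mul, Matrix.mul_sub, hU, hU']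
    abel
  have tr1 : trace (Dᴴ * E)
      = trace H + trace H' - trace ((Uᴴ * U') * H') - trace ((U'ᴴ * U) * H) := by
    rw [h1, trace_sub, trace_sub, trace_add]
  have tr2 : trace (Eᴴ * D)
      = trace H + trace H' - trace (H * (Uᴴ * U')) - trace (H' * (U'ᴴ * U)) := by
    rw [h2, trace_sub, trace_sub, trace_add]
  have tr3a : trace (H * (Dᴴ * D))
      = trace H + trace H - trace (H * (Uᴴ * U')) - trace (H * (U'ᴴ * U)) := by
    rw [h3]
    simp only [Matrix.mul_sub, Matrix.mul_add, Matrix.mul_one, trace_sub, trace_add]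
  have tr3b : trace ((Dᴴ * D) * H')
      = trace H' + trace H' - trace ((Uᴴ * U') * H') - trace ((U'ᴴ * U) * H') := by
    rw [h3]
    simp only [Matrix.sub_mul, Matrix.add_mul, Matrix.one_mul, trace_sub, trace_add]
  have sw1 : trace ((U'ᴴ * U) * H) = trace (H * (U'ᴴ * U)) := trace_mul_comm _ _
  have sw2 : trace (H' * (U'ᴴ * U)) = trace ((U'ᴴ * U) * H') := trace_mul_comm _ _
  have hid : trace (H * (Dᴴ * D)) + trace ((Dᴴ * D) * H')
      = trace (Dᴴ * E) + trace (Eᴴ * D) := by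
    rw [tr1, tr2, tr3a, tr3b]
    linear_combination sw1 + sw2
  have hconj : Eᴴ * D = (Dᴴ * E)ᴴ := by
    rw [Matrix.conjTranspose_mul, Matrix.conjTranspose_conjTranspose]
  have hre2 : (trace (Dᴴ * E) + trace (Eᴴ * D)).re = 2 * (trace (Dᴴ * E)).re := by
    rw [hconj, trace_conjTranspose]
    simp only [Complex.add_re]
    have : (star (trace (Dᴴ * E))).re = (trace (Dᴴ * E)).re := by
      simp [Complex.star_def]
    rw [this]
    ring
  have hcs := re_trace_le_frob D E
  have key : (σ + σ') * t ≤ 2 * (frob D * frob E) := by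
    have e1 : (trace (H * (Dᴴ * D))).re + (trace ((Dᴴ * D) * H')).re
        = 2 * (trace (Dᴴ * E)).re := by
      rw [← Complex.add_re, hid, hre2]
    have e2 : (σ + σ') * t = σ * t + σ' * t := by ring
    linarith [hHN, hNH', hcs, e1]
  have hfE : 0 ≤ frob E := Real.sqrt_nonneg _
  have hfD : 0 ≤ frob D := Real.sqrt_nonneg _
  have hs : 0 < σ + σ' := by linarith
  rw [div_mul_eq_mul_div, le_div_iff₀ hs]
  rcases eq_or_lt_of_le hfD with h0 | h0
  · rw [← h0, zero_mul]
    positivity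
  · have hkey : (σ + σ') * (frob D) ^ 2 ≤ 2 * (frob D * frob E) := by
      rw [hfd]; exact key
    have h5 : frob D * ((σ + σ') * frob D) ≤ frob D * (2 * frob E) := by
      calc frob D * ((σ + σ') * frob D) = (σ + σ') * (frob D) ^ 2 := by ring
        _ ≤ 2 * (frob D * frob E) := hkey
        _ = frob D * (2 * frob E) := by ring
    have h6 := (mul_le_mul_iff_right₀ h0).mp h5
    nlinarith [h6]
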